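/- Separating multiplication distributes over pointwise maximum: X ⋆ max(Y, Z) = max(X ⋆ Y, X ⋆ Z) for one-bounded expectations X, Y, Z. -/

import Mathlib

open ENNReal

abbrev Heap := ℤ → Option ℤ
abbrev Stack := String → ℤ
abbrev PState := Stack × Heap
abbrev Exp := PState → ℝ≥0∞

/-- Heaps are disjoint if their domains are disjoint. -/
def HDisj (h₁ h₂ : Heap) : Prop := ∀ l, h₁ l = none ∨ h₂ l = none

/-- Disjoint union of heaps. -/
def HJoin (h₁ h₂ : Heap) : Heap := fun l => (h₁ l).orElse (fun _ => h₂ l)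

/-- Separating multiplication: (X ⋆ Y)(s,h) = sup { X(s,h₁)·Y(s,h₂) | h₁ ⋆ h₂ = h }. -/
noncomputable def sepMul (X Y : Exp) : Exp := fun σ =>
  ⨆ h₁, ⨆ h₂, ⨆ (_ : HDisj h₁ h₂ ∧ HJoin h₁ h₂ = σ.2), X (σ.1, h₁) * Y (σ.1, h₂)

/-- One-bounded expectations take values in [0,1]. -/
def OneBounded (X : Exp) : Prop := ∀ σ, X σ ≤ 1

/-- Qualitative expectations take values in {0,1}. -/
def Qualitative (φ : Exp) : Prop := ∀ σ, φ σ = 0 ∨ φ σ = 1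

/-- Guarded magic wand: (φ -⋆ X)(s,h) = inf { X(s, h ⋆ h') | φ(s,h') = 1, h' ⊥ h },
with the infimum of the empty set being 1 (for one-bounded X). -/
noncomputable def wand (φ X : Exp) : Exp := fun σ =>
  (⨅ h' : {h' : Heap // φ (σ.1, h') = 1 ∧ HDisj σ.2 h'}, X (σ.1, HJoin σ.2 h'.1)) ⊓ 1

theorem sepMul_max (X Y Z : Exp)
    (hX : OneBounded X) (hY : OneBounded Y) (hZ : OneBounded Z) :
    sepMul X (fun σ => max (Y σ) (Z σ)) =
      fun σ => max (sepMul X Y σ) (sepMul X Z σ) := by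
  funext σ
  simp only [sepMul]
  have key : ∀ h₁ h₂ : Heap,
      X (σ.1, h₁) * max (Y (σ.1, h₂)) (Z (σ.1, h₂)) =
        max (X (σ.1, h₁) * Y (σ.1, h₂)) (X (σ.1, h₁) * Z (σ.1, h₂)) := by
    intro h₁ h₂
    rcases le_total (Y (σ.1, h₂)) (Z (σ.1, h₂)) with h | h
    · rw [max_eq_right h, max_eq_right (mul_le_mul_right h _)]
    · rw [max_eq_left h, max_eq_left (mul_le_mul_right h _)]
  simp only [key, ← iSup_sup_eq]
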